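/- The polynomial $\phi(x) = x^2 - x + 11$ is irreducible modulo $2$, modulo $3$, and modulo $5$, and the polynomial $\frac{1}{15}\phi(x)^4 + 2\phi(x)^2 + 15$ is reducible over $\mathbb{Q}$. -/

import Mathlib

open Polynomial

/-- `u j` is the product of all odd positive integers `≤ j`. -/
def u (j : ℕ) : ℕ := ∏ i ∈ Finset.filter (fun i => Odd i) (Finset.range (j+1)), i

lemma aux_irred (p : ℕ) [Fact p.Prime] (h : ∀ x : ZMod p, x^2 - x + 11 ≠ 0) :
    Irreducible ((X^2 - X + C 11 : ℤ[X]).map (Int.castRingHom (ZMod p))) := by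
  have hmap : (X^2 - X + C 11 : ℤ[X]).map (Int.castRingHom (ZMod p))
      = (X^2 - X + C 11 : (ZMod p)[X]) := by
    simp [Polynomial.map_add, Polynomial.map_sub, Polynomial.map_pow, map_ofNat]
  rw [hmap]
  have hdeg : (X^2 - X + C 11 : (ZMod p)[X]).natDegree = 2 := by
    compute_degree!
  rw [Polynomial.irreducible_iff_roots_eq_zero_of_degree_le_three (by omega) (by omega)]
  rw [Multiset.eq_zero_iff_forall_notMem]
  intro a ha
  rw [Polynomial.mem_roots, Polynomial.IsRoot] at ha
  · simp at ha
    exact h a ha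
  · intro h0
    rw [h0] at hdeg
    simp at hdeg

theorem stmt_8 :
    Irreducible ((X^2 - X + C 11 : ℤ[X]).map (Int.castRingHom (ZMod 2))) ∧
    Irreducible ((X^2 - X + C 11 : ℤ[X]).map (Int.castRingHom (ZMod 3))) ∧
    Irreducible ((X^2 - X + C 11 : ℤ[X]).map (Int.castRingHom (ZMod 5))) ∧
    ¬ Irreducible (C (15:ℚ)⁻¹ * ((X^2 - X + C 11 : ℤ[X]).map (Int.castRingHom ℚ))^4
        + C 2 * ((X^2 - X + C 11 : ℤ[X]).map (Int.castRingHom ℚ))^2 + C 15) := by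
  have d2 : ∀ x : ZMod 2, x^2 - x + 11 ≠ 0 := by decide
  have d3 : ∀ x : ZMod 3, x^2 - x + 11 ≠ 0 := by decide
  have d5 : ∀ x : ZMod 5, x^2 - x + 11 ≠ 0 := by decide
  haveI : Fact (Nat.Prime 2) := ⟨by norm_num⟩
  haveI : Fact (Nat.Prime 3) := ⟨by norm_num⟩
  haveI : Fact (Nat.Prime 5) := ⟨by norm_num⟩
  refine ⟨aux_irred 2 d2, aux_irred 3 d3, aux_irred 5 d5, ?_⟩
  set φ : ℚ[X] := (X^2 - X + C 11 : ℤ[X]).map (Int.castRingHom ℚ) with hφ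
  have hφ' : φ = (X^2 - X + C 11 : ℚ[X]) := by
    simp [hφ, Polynomial.map_add, Polynomial.map_sub, Polynomial.map_pow, map_ofNat]
  have hq : (φ^2 + C 15).natDegree = 4 := by
    rw [hφ']
    compute_degree!
  have hfac : C (15:ℚ)⁻¹ * φ^4 + C 2 * φ^2 + C 15
      = (C (15:ℚ)⁻¹ * (φ^2 + C 15)) * (φ^2 + C 15) := by
    have h3 : (C (2:ℚ)) = 2 := map_ofNat C 2
    have h4 : (C (15:ℚ)) = 15 := map_ofNat C 15
    have h15 : (C (15:ℚ)⁻¹) * 15 = 1 := by rw [← h4, ← C_mul]; norm_num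
    rw [h3, h4]
    linear_combination -(2*φ^2 + 15) * h15
  rw [hfac]
  intro hirr
  rcases hirr.isUnit_or_isUnit rfl with hu | hu
  · have := Polynomial.natDegree_eq_zero_of_isUnit hu
    rw [Polynomial.natDegree_C_mul (by norm_num), hq] at this
    omega
  · have := Polynomial.natDegree_eq_zero_of_isUnit hu
    rw [hq] at this
    omega
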